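/- Let Y be an absolutely continuous random variable with finite mean, and let R be a missingness indicator independent of Y (MCAR) with P(R = 0) = p < α. Define the composite variable U = Y on {R = 1} and U = c on {R = 0} where c is below the essential infimum of Y. Then in general E[U | U > F_U^{-1}(α)] ≠ E[Y], and moreover E[U | U > F_U^{-1}(α)] = E[Y | Y > F^{-1}(α')] where α' satisfies (1−α')=(1−α)/(1−p); in particular if α > p and Y is not degenerate above its α'-quantile, the composite trimmed mean is strictly greater than E[Y]. -/

import Mathlib

open MeasureTheory ProbabilityTheory Set
open scoped ENNReal NNReal

lemma intY {Ω : Type*} [MeasurableSpace Ω] (μ : Measure Ω) [IsProbabilityMeasure μ]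
    (Y : Ω → ℝ) (f : ℝ → ℝ) (hY : Measurable Y) (hf0 : ∀ y, 0 ≤ f y)
    (hYd : ∀ x, μ {ω | Y ω ≤ x} = ENNReal.ofReal (∫ y in Iic x, f y))
    (hmean : Integrable (fun y => y * f y)) : Integrable Y μ := by
  -- f is a.e. strongly measurable
  have hfm : AEStronglyMeasurable f (volume : Measure ℝ) := by
    have h0 : (volume : Measure ℝ) {(0:ℝ)} = 0 := measure_singleton 0
    have : f =ᵐ[volume] fun y => (y * f y) * y⁻¹ := by
      filter_upwards [compl_mem_ae_iff.2 h0] with y hy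
      have hy' : y ≠ 0 := by simpa using hy
      field_simp
    exact (hmean.1.mul (measurable_inv.aestronglyMeasurable)).congr this.symm
  -- f is integrable on each Iic x
  have hint : ∀ x : ℝ, IntegrableOn f (Iic x) := by
    by_contra h
    push_neg at h
    obtain ⟨x₀, hx₀⟩ := h
    have hz : ∀ x : ℝ, x₀ ≤ x → μ {ω | Y ω ≤ x} = 0 := by
      intro x hx
      have : ¬ IntegrableOn f (Iic x) := fun h => hx₀ (h.mono_set (Iic_subset_Iic.2 hx))
      rw [hYd x, integral_undef this]; simp
    have huniv : (Set.univ : Set Ω) ⊆ ⋃ n : ℕ, {ω | Y ω ≤ x₀ + n} := by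
      intro ω _
      obtain ⟨n, hn⟩ := exists_nat_ge (Y ω - x₀)
      exact mem_iUnion.2 ⟨n, by simp; linarith⟩
    have : μ Set.univ = 0 := by
      refine le_antisymm ?_ zero_le
      refine (measure_mono huniv).trans ?_
      refine (measure_iUnion_le _).trans ?_
      have : ∀ n : ℕ, μ {ω | Y ω ≤ x₀ + n} = 0 := fun n => hz _ (le_add_of_nonneg_right n.cast_nonneg)
      simp [this]
    simp [measure_univ] at this
  -- relate lintegral and integral on Iic x
  have hofm : AEMeasurable (fun y => ENNReal.ofReal (f y)) (volume : Measure ℝ) :=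
    ENNReal.measurable_ofReal.comp_aemeasurable hfm.aemeasurable
  have hof : ∀ x : ℝ, ∫⁻ y in Iic x, ENNReal.ofReal (f y) = μ {ω | Y ω ≤ x} := by
    intro x
    rw [hYd x, ofReal_integral_eq_lintegral_ofReal (hint x) (ae_of_all _ hf0)]
  set ν : Measure ℝ := volume.withDensity (fun y => ENNReal.ofReal (f y)) with hνdef
  have hνIic : ∀ x : ℝ, ν (Iic x) = μ {ω | Y ω ≤ x} := by
    intro x
    rw [withDensity_apply _ measurableSet_Iic, hof]
  have hνfin : IsFiniteMeasure ν := by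
    constructor
    have hU : (⋃ n : ℕ, Iic (n : ℝ)) = univ := by
      ext y; simp only [mem_iUnion, mem_Iic, mem_univ, iff_true]
      obtain ⟨n, hn⟩ := exists_nat_ge y
      exact ⟨n, hn⟩
    have := Directed.measure_iUnion (μ := ν) (s := fun n : ℕ => Iic (n : ℝ))
      (Monotone.directed_le (fun a b hab => Iic_subset_Iic.2 (Nat.cast_le.2 hab)))
    rw [← hU, this]
    refine lt_of_le_of_lt (iSup_le fun n => ?_) (by norm_num : (2:ℝ≥0∞) < ⊤)
    rw [hνIic]
    exact le_trans prob_le_one one_le_two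
  have hmap : μ.map Y = ν := by
    refine Measure.ext_of_Iic (μ.map Y) ν (fun a => ?_)
    rw [Measure.map_apply hY measurableSet_Iic, hνIic]
    rfl
  have : Integrable id ν := by
    refine ⟨aestronglyMeasurable_id, ?_⟩
    rw [HasFiniteIntegral, hνdef]
    simp only [id_eq]
    rw [lintegral_withDensity_eq_lintegral_mul₀ hofm measurable_enorm.aemeasurable]
    have heq : (fun y : ℝ => (ENNReal.ofReal (f y)) * (‖y‖₊ : ℝ≥0∞))
        = fun y : ℝ => (‖y * f y‖₊ : ℝ≥0∞) := by
      ext y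
      rw [← enorm_eq_nnnorm, ← enorm_eq_nnnorm, ← ofReal_norm, ← ofReal_norm,
        Real.norm_eq_abs, Real.norm_eq_abs, ← ENNReal.ofReal_mul (hf0 y), abs_mul,
        abs_of_nonneg (hf0 y)]
      ring_nf
    calc ∫⁻ y, (ENNReal.ofReal (f y)) * (‖y‖₊ : ℝ≥0∞)
        = ∫⁻ y, (‖y * f y‖₊ : ℝ≥0∞) := lintegral_congr fun y => congrFun heq y
      _ < ⊤ := hmean.2
  rw [← hmap] at this
  have := (integrable_map_measure aestronglyMeasurable_id hY.aemeasurable).1 this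
  simpa using this

noncomputable def quant (F : ℝ → ℝ) (α : ℝ) : ℝ := sInf {x | α ≤ F x}

noncomputable def condMeanAbove {Ω : Type*} [MeasurableSpace Ω]
    (μ : Measure Ω) (X : Ω → ℝ) (q : ℝ) : ℝ :=
  (∫ ω in {ω | q < X ω}, X ω ∂μ) / (μ {ω | q < X ω}).toReal

theorem stmt15 {Ω : Type*} [MeasurableSpace Ω] (μ : Measure Ω) [IsProbabilityMeasure μ]
    (Y : Ω → ℝ) (R : Ω → Bool) (f : ℝ → ℝ) (α α' p c : ℝ)
    (hY : Measurable Y) (hR : Measurable R)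
    (hf0 : ∀ y, 0 ≤ f y)
    (hYd : ∀ x, μ {ω | Y ω ≤ x} = ENNReal.ofReal (∫ y in Iic x, f y))
    (hmean : Integrable (fun y => y * f y))
    (hindep : IndepFun Y R μ)
    (hp : p = (μ {ω | R ω = false}).toReal)
    (hα : α ∈ Ioo (0:ℝ) 1) (hpα : p < α)
    (hα' : 1 - α' = (1 - α) / (1 - p))
    (hc : ∀ᵐ ω ∂μ, c < Y ω)
    (F : ℝ → ℝ) (hF : F = fun x => (μ {ω | Y ω ≤ x}).toReal)
    (U : Ω → ℝ) (hU : U = fun ω => if R ω then Y ω else c)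
    (FU : ℝ → ℝ) (hFU : FU = fun x => (μ {ω | U ω ≤ x}).toReal)
    (hndeg : ¬ ∃ m : ℝ, ∀ᵐ ω ∂μ, quant F α' < Y ω → Y ω = m) :
    condMeanAbove μ U (quant FU α) = condMeanAbove μ Y (quant F α') ∧
    (∫ ω, Y ω ∂μ) < condMeanAbove μ U (quant FU α) := by
  obtain ⟨hα0, hα1⟩ := hα
  have hp0 : 0 ≤ p := hp ▸ ENNReal.toReal_nonneg
  have hp1 : 0 < 1 - p := by linarith
  have hα'v : α' = (α - p) / (1 - p) := by
    have h1p : (1 : ℝ) - p ≠ 0 := ne_of_gt hp1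
    field_simp at hα'
    rw [eq_div_iff h1p]
    nlinarith [hα']
  have hα'0 : 0 < α' := by
    rw [hα'v]
    exact div_pos (by linarith) hp1
  have hα'1 : α' < 1 := by
    rw [hα'v, div_lt_one hp1]; linarith
  have hIntY : Integrable Y μ := intY μ Y f hY hf0 hYd hmean
  have hcnull : μ {ω | ¬ c < Y ω} = 0 := by
    rw [← ae_iff] at *; exact hc
  have hF0 : ∀ x, x < c → μ {ω | Y ω ≤ x} = 0 := by
    intro x hx
    refine measure_mono_null (fun ω hω => ?_) hcnull
    simp only [mem_setOf_eq, not_lt] at *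
    linarith
  have hind : ∀ (s : Set ℝ), MeasurableSet s → ∀ (t : Set Bool),
      μ (Y ⁻¹' s ∩ R ⁻¹' t) = μ (Y ⁻¹' s) * μ (R ⁻¹' t) := by
    intro s hs t
    exact (indepFun_iff_measure_inter_preimage_eq_mul.1 hindep) s t hs trivial
  have hRsplit : (R ⁻¹' {true}) = (R ⁻¹' {false})ᶜ := by
    ext ω; cases h : R ω <;> simp [h]
  have hpf : μ (R ⁻¹' {false}) = ENNReal.ofReal p := by
    rw [hp]
    exact (ENNReal.ofReal_toReal (measure_ne_top μ _)).symm
  have hpt : μ (R ⁻¹' {true}) = ENNReal.ofReal (1 - p) := by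
    rw [hRsplit, measure_compl (hR (measurableSet_singleton false)) (measure_ne_top μ _),
      measure_univ, hpf, ← ENNReal.ofReal_one, ← ENNReal.ofReal_sub _ hp0]
  have hptR : (μ (R ⁻¹' {true})).toReal = 1 - p := by
    rw [hpt, ENNReal.toReal_ofReal (le_of_lt hp1)]
  have hUle : ∀ x : ℝ, c ≤ x → {ω | U ω ≤ x} = (R ⁻¹' {false}) ∪ (Y ⁻¹' (Iic x) ∩ R ⁻¹' {true}) := by
    intro x hx
    ext ω; cases h : R ω <;> simp [hU, h, hx]
  have hFUeq : ∀ x : ℝ, c ≤ x → FU x = p + (1 - p) * F x := by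
    intro x hx
    rw [hFU, hF]
    simp only
    have hmeq : μ {ω | U ω ≤ x} = μ (R ⁻¹' {false}) + μ (Y ⁻¹' (Iic x) ∩ R ⁻¹' {true}) := by
      rw [hUle x hx]
      refine measure_union ?_ ((hY measurableSet_Iic).inter (hR (measurableSet_singleton true)))
      refine Disjoint.mono_right inter_subset_right ?_
      rw [hRsplit]
      exact disjoint_compl_right
    rw [hmeq, hind _ measurableSet_Iic,
      ENNReal.toReal_add (measure_ne_top μ _)
        (ENNReal.mul_ne_top (measure_ne_top μ _) (measure_ne_top μ _)),
      ENNReal.toReal_mul, hptR]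
    have h1 : Y ⁻¹' (Iic x) = {ω | Y ω ≤ x} := rfl
    have h2 : (μ (R ⁻¹' {false})).toReal = p := by rw [hp]; rfl
    rw [h1, h2]
    ring
  have hFU0 : ∀ x : ℝ, x < c → FU x = 0 := by
    intro x hx
    rw [hFU]
    simp only
    have hsub : {ω | U ω ≤ x} ⊆ {ω | Y ω ≤ x} ∪ {ω | ¬ c < Y ω} := by
      intro ω hω
      simp only [hU, mem_setOf_eq] at hω
      cases h : R ω
      · simp only [h] at hω
        simp only [Bool.false_eq_true, if_false] at hω
        right; simp only [mem_setOf_eq, not_lt]; linarith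
      · simp only [h, if_true] at hω
        left; exact hω
    have h0 : μ {ω | U ω ≤ x} = 0 := by
      refine measure_mono_null hsub (le_antisymm ?_ zero_le)
      refine le_trans (measure_union_le _ _) ?_
      rw [hF0 x hx, hcnull]; simp
    rw [h0]; simp
  -- the two quantile sets coincide
  have hFmono : Monotone F := by
    intro a b hab
    rw [hF]
    exact ENNReal.toReal_mono (measure_ne_top μ _) (measure_mono (fun ω h => le_trans h hab))
  have hF0' : ∀ x, x < c → F x = 0 := by
    intro x hx; rw [hF]; simp [hF0 x hx]
  have hsetEq : {x | α ≤ FU x} = {x | α' ≤ F x} := by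
    ext x
    simp only [mem_setOf_eq]
    rcases lt_or_ge x c with hx | hx
    · constructor
      · intro h; rw [hFU0 x hx] at h; linarith
      · intro h; rw [hF0' x hx] at h; linarith
    · rw [hFUeq x hx, hα'v, div_le_iff₀ hp1]
      constructor <;> intro h <;> nlinarith
  have hquant : quant FU α = quant F α' := by
    unfold quant; rw [hsetEq]
  set q : ℝ := quant F α' with hqdef
  -- the set S
  have hSne : {x | α' ≤ F x}.Nonempty := by
    have hsup : (⨆ n : ℕ, μ {ω | Y ω ≤ n}) = 1 := by
      have hU2 : (⋃ n : ℕ, {ω | Y ω ≤ (n:ℝ)}) = univ := by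
        ext ω; simp only [mem_iUnion, mem_setOf_eq, mem_univ, iff_true]
        obtain ⟨n, hn⟩ := exists_nat_ge (Y ω)
        exact ⟨n, hn⟩
      rw [← measure_univ (μ := μ), ← hU2]
      exact (Directed.measure_iUnion (μ := μ) (s := fun n : ℕ => {ω | Y ω ≤ (n:ℝ)})
        (Monotone.directed_le (fun a b hab ω h => by
          simp only [mem_setOf_eq] at h ⊢
          exact le_trans h (Nat.cast_le.2 hab)))).symm
    have : ENNReal.ofReal α' < ⨆ n : ℕ, μ {ω | Y ω ≤ n} := by
      rw [hsup]
      exact lt_of_lt_of_le (ENNReal.ofReal_lt_one.2 hα'1) le_rfl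
    obtain ⟨n, hn⟩ := lt_iSup_iff.1 this
    refine ⟨n, ?_⟩
    rw [hF]
    simp only [mem_setOf_eq]
    rw [← ENNReal.ofReal_le_iff_le_toReal (measure_ne_top μ _)]
    exact hn.le
  have hSbd : BddBelow {x | α' ≤ F x} := by
    refine ⟨c, fun x hx => ?_⟩
    by_contra h
    push_neg at h
    simp only [mem_setOf_eq, hF0' x h] at hx
    linarith
  have hqc : c ≤ q := le_csInf hSne (fun x hx => by
    by_contra h
    push_neg at h
    simp only [mem_setOf_eq, hF0' x h] at hx
    linarith)
  -- F(q) ≥ α' via right continuity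
  have hFq : ENNReal.ofReal α' ≤ μ {ω | Y ω ≤ q} := by
    have hstep : ∀ n : ℕ, ENNReal.ofReal α' ≤ μ {ω | Y ω ≤ q + 1 / (n + 1)} := by
      intro n
      have hlt : sInf {x | α' ≤ F x} < q + 1 / (n + 1) := by
        have hqs : sInf {x | α' ≤ F x} = q := rfl
        rw [hqs]
        have : (0:ℝ) < 1 / (n + 1) := by positivity
        linarith
      obtain ⟨y, hy, hylt⟩ := exists_lt_of_csInf_lt hSne hlt
      simp only [mem_setOf_eq, hF] at hy
      have h1 : ENNReal.ofReal α' ≤ μ {ω | Y ω ≤ y} := by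
        rw [ENNReal.ofReal_le_iff_le_toReal (measure_ne_top μ _)]
        exact hy
      exact le_trans h1 (measure_mono (fun ω h => le_trans h hylt.le))
    have hiInter : {ω | Y ω ≤ q} = ⋂ n : ℕ, {ω | Y ω ≤ q + 1 / (n + 1)} := by
      ext ω
      simp only [mem_iInter, mem_setOf_eq]
      constructor
      · intro h n
        have : (0:ℝ) < 1 / (n + 1) := by positivity
        linarith
      · intro h
        by_contra hcon
        push_neg at hcon
        obtain ⟨n, hn⟩ := exists_nat_one_div_lt (by linarith : 0 < Y ω - q)
        have := h n
        linarith
    rw [hiInter]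
    have hanti : Antitone (fun n : ℕ => {ω | Y ω ≤ q + 1 / (n + 1)}) := by
      intro a b hab ω h
      simp only [mem_setOf_eq] at h ⊢
      have hab' : (a:ℝ) ≤ b := Nat.cast_le.2 hab
      have : (1:ℝ) / (b + 1) ≤ 1 / (a + 1) := by
        apply one_div_le_one_div_of_le
        · positivity
        · linarith
      linarith
    rw [hanti.measure_iInter (fun n => (hY measurableSet_Iic).nullMeasurableSet)
      ⟨0, measure_ne_top μ _⟩]
    exact le_iInf hstep
  have hFqpos : 0 < μ {ω | Y ω ≤ q} :=
    lt_of_lt_of_le (ENNReal.ofReal_pos.2 hα'0) hFq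
  have hmeasYq : MeasurableSet {ω | Y ω ≤ q} := hY measurableSet_Iic
  have hmeasYgt : MeasurableSet {ω | q < Y ω} := hY measurableSet_Ioi
  -- positivity of upper tail from nondegeneracy
  have hmpos : 0 < μ {ω | q < Y ω} := by
    rcases eq_or_lt_of_le (zero_le : 0 ≤ μ {ω | q < Y ω}) with h | h
    · exfalso
      apply hndeg
      refine ⟨0, ?_⟩
      have hae : ∀ᵐ ω ∂μ, ¬ q < Y ω := by
        rw [ae_iff]
        simpa [not_not] using h.symm
      filter_upwards [hae] with ω hω h2
      exact absurd h2 hω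
    · exact h
  have hcompl : {ω | q < Y ω} = {ω | Y ω ≤ q}ᶜ := by
    ext ω; simp [not_le]
  set mR : ℝ := (μ {ω | q < Y ω}).toReal with hmRdef
  set FqR : ℝ := (μ {ω | Y ω ≤ q}).toReal with hFqRdef
  have hsum : FqR + mR = 1 := by
    rw [hmRdef, hFqRdef, hcompl,
      ← ENNReal.toReal_add (measure_ne_top μ _) (measure_ne_top μ _),
      measure_add_measure_compl hmeasYq, measure_univ, ENNReal.toReal_one]
  have hmR0 : 0 < mR := ENNReal.toReal_pos (ne_of_gt hmpos) (measure_ne_top μ _)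
  have hFqR0 : 0 < FqR := ENNReal.toReal_pos (ne_of_gt hFqpos) (measure_ne_top μ _)
  have hmR1 : mR < 1 := by linarith
  -- integral splits
  have hsplit : ∫ ω, Y ω ∂μ
      = (∫ ω in {ω | Y ω ≤ q}, Y ω ∂μ) + ∫ ω in {ω | q < Y ω}, Y ω ∂μ := by
    have h := integral_add_compl hmeasYq hIntY (f := Y)
    rw [← hcompl] at h
    exact h.symm
  have hIpos : 0 < ∫ ω in {ω | q < Y ω}, (Y ω - q) ∂μ := by
    rw [setIntegral_pos_iff_support_of_nonneg_ae
      ((ae_restrict_iff' hmeasYgt).2 (ae_of_all _ fun ω hω => sub_nonneg.2 (le_of_lt hω)))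
      ((hIntY.integrableOn).sub ((integrable_const q).integrableOn))]
    refine lt_of_lt_of_le hmpos (measure_mono fun ω hω => ?_)
    exact ⟨ne_of_gt (sub_pos.2 hω), hω⟩
  have hsub2 : ∫ ω in {ω | q < Y ω}, (Y ω - q) ∂μ
      = (∫ ω in {ω | q < Y ω}, Y ω ∂μ) - q * mR := by
    rw [integral_sub hIntY.integrableOn (integrable_const q).integrableOn, setIntegral_const]
    rw [smul_eq_mul, measureReal_def]
    ring
  have hIpgt : q * mR < ∫ ω in {ω | q < Y ω}, Y ω ∂μ := by
    rw [hsub2] at hIpos; linarith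
  have hImle : (∫ ω in {ω | Y ω ≤ q}, Y ω ∂μ) ≤ q * FqR := by
    have h := setIntegral_mono_on hIntY.integrableOn (integrable_const q).integrableOn
      hmeasYq (fun ω hω => hω)
    rw [setIntegral_const, smul_eq_mul, measureReal_def] at h
    linarith [h]
  have hFqReq : FqR = 1 - mR := by linarith
  rw [hFqReq] at hImle
  have hpart2 : (∫ ω, Y ω ∂μ) < (∫ ω in {ω | q < Y ω}, Y ω ∂μ) / mR := by
    rw [lt_div_iff₀ hmR0, hsplit]
    nlinarith [mul_le_mul_of_nonneg_right hImle (le_of_lt hmR0),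
      mul_lt_mul_of_pos_right hIpgt (by linarith : (0:ℝ) < 1 - mR)]
  -- Part 1
  have hUset : {ω | q < U ω} = Y ⁻¹' (Ioi q) ∩ R ⁻¹' {true} := by
    ext ω; cases h : R ω <;> simp [hU, h, hqc.not_gt]
  have hUmeas : MeasurableSet {ω | q < U ω} := by
    rw [hUset]
    exact (hY measurableSet_Ioi).inter (hR (measurableSet_singleton true))
  have hden : (μ {ω | q < U ω}).toReal = (1 - p) * mR := by
    rw [hUset, hind _ measurableSet_Ioi, ENNReal.toReal_mul, hptR]
    rw [mul_comm]
    rfl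
  -- independence factorization for the numerator
  set g : ℝ → ℝ := (Ioi q).indicator id with hgdef
  set h2 : Bool → ℝ := fun b => if b then (1:ℝ) else 0 with hhdef
  have hgm : Measurable g := measurable_id.indicator measurableSet_Ioi
  have hhm : Measurable h2 := measurable_from_top
  have hX1eq : (fun ω => g (Y ω)) = (Y ⁻¹' (Ioi q)).indicator Y := by
    funext ω
    by_cases h : Y ω ∈ Ioi q <;> simp [hgdef, Set.indicator_apply, h]
  have hX2eq : (fun ω => h2 (R ω)) = (R ⁻¹' {true}).indicator (fun _ => (1:ℝ)) := by
    funext ω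
    cases h : R ω <;> simp [hhdef, Set.indicator_apply, h]
  have hX1int : Integrable (fun ω => g (Y ω)) μ := by
    rw [hX1eq]
    exact hIntY.indicator (hY measurableSet_Ioi)
  have hX2int : Integrable (fun ω => h2 (R ω)) μ := by
    rw [hX2eq]
    exact (integrable_const (1:ℝ)).indicator (hR (measurableSet_singleton true))
  have hindep12 : IndepFun (fun ω => g (Y ω)) (fun ω => h2 (R ω)) μ := hindep.comp hgm hhm
  have hfact := hindep12.integral_mul_eq_mul_integral hX1int.aestronglyMeasurable hX2int.aestronglyMeasurable
  have hmul : (fun ω => g (Y ω)) * (fun ω => h2 (R ω))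
      = (Y ⁻¹' (Ioi q) ∩ R ⁻¹' {true}).indicator Y := by
    funext ω
    rw [Pi.mul_apply]
    cases h : R ω
    · simp [Set.indicator, hgdef, hhdef, h]
    · by_cases h3 : Y ω ∈ Ioi q <;>
        simp [Set.indicator, hgdef, hhdef, h, h3]
  have hIX1 : ∫ ω, g (Y ω) ∂μ = ∫ ω in {ω | q < Y ω}, Y ω ∂μ := by
    rw [hX1eq, integral_indicator (hY measurableSet_Ioi)]
    rfl
  have hIX2 : ∫ ω, h2 (R ω) ∂μ = 1 - p := by
    rw [hX2eq, integral_indicator (hR (measurableSet_singleton true)), setIntegral_const,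
      smul_eq_mul, mul_one, measureReal_def, hptR]
  have hnum : ∫ ω in {ω | q < U ω}, U ω ∂μ = (1 - p) * ∫ ω in {ω | q < Y ω}, Y ω ∂μ := by
    have hUY : ∫ ω in {ω | q < U ω}, U ω ∂μ = ∫ ω in {ω | q < U ω}, Y ω ∂μ := by
      refine setIntegral_congr_fun hUmeas (fun ω hω => ?_)
      rw [hUset] at hω
      have : R ω = true := hω.2
      simp [hU, this]
    rw [hUY]
    have : ∫ ω in {ω | q < U ω}, Y ω ∂μ = ∫ ω, (Y ⁻¹' (Ioi q) ∩ R ⁻¹' {true}).indicator Y ω ∂μ := by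
      rw [integral_indicator ((hY measurableSet_Ioi).inter (hR (measurableSet_singleton true))),
        hUset]
    rw [this, ← hmul, hfact, hIX1, hIX2]
    ring
  have hpart1 : condMeanAbove μ U (quant FU α) = condMeanAbove μ Y q := by
    rw [hquant]
    unfold condMeanAbove
    rw [hnum, hden, ← hmRdef, mul_div_mul_left _ _ (ne_of_gt hp1)]
  refine ⟨hpart1, ?_⟩
  rw [hpart1]
  exact hpart2
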